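/- Single element recovery lower bound with OR-queries: for any r-round deterministic algorithm with OR-query access to a nonzero vector x ∈ ℝ^N_{≥0} making strictly fewer than N^{1/r} − 1 queries in every round, there is an adversary strategy maintaining an active set A ⊆ [N] such that after all r rounds, every 1-answered query Q satisfies Q ∩ A = ∅ or |Q ∩ A| ≥ 2, and hence for any index j the algorithm outputs, there is a 0/1-vector consistent with all answers with x_j = 0. -/
import Mathlib


open scoped Classical

/-- An `r`-round deterministic OR-query algorithm on vectors indexed by `Fin N`:
in each round it makes a batch of OR-queries (a list of subsets), and the next
round depends on the vector of Boolean answers; after `r` rounds it outputs an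
index. -/
inductive ORAlg (N : ℕ) : ℕ → Type
  | leaf (j : Fin N) : ORAlg N 0
  | node {r : ℕ} (qs : List (Finset (Fin N)))
      (next : (Fin qs.length → Bool) → ORAlg N r) : ORAlg N (r + 1)

/-- Answer of the OR-query `S` on the vector `x`: does `S` meet `supp(x)`? -/
noncomputable def orAnswer {N : ℕ} (x : Fin N → ℝ) (S : Finset (Fin N)) : Bool :=
  if ∃ j ∈ S, x j ≠ 0 then true else false

/-- Running an algorithm on input vector `x`. -/
noncomputable def orRun {N : ℕ} : {r : ℕ} → ORAlg N r → (Fin N → ℝ) → Fin N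
  | _, .leaf j, _ => j
  | _, .node qs next, x => orRun (next (fun i => orAnswer x (qs.get i))) x

/-- The maximum number of queries made in any single round. -/
noncomputable def orWidth {N : ℕ} : {r : ℕ} → ORAlg N r → ℕ
  | _, .leaf _ => 0
  | _, .node qs next =>
      max qs.length (Finset.univ.sup fun b : Fin qs.length → Bool => orWidth (next b))

/-- One round of the adversary: we can choose a set `z` of queries to answer 0
(removing their intersection with the active set), so that every other query
has large intersection with the shrunken active set `A'`, and the total
removal is at most `z.card * t`. -/
lemma roundLemma {ι α : Type*} [DecidableEq ι] [DecidableEq α]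
    (Q : ι → Finset α) (t : ℝ) (s : Finset ι) :
    ∀ A : Finset α, ∃ z A', z ⊆ s ∧ A' ⊆ A ∧
      ((A.card : ℝ) ≤ (A'.card : ℝ) + (z.card : ℝ) * t) ∧
      (∀ i ∈ z, Q i ∩ A' = ∅) ∧
      (∀ i ∈ s, i ∉ z → t < ((Q i ∩ A').card : ℝ)) := by
  induction s using Finset.strongInduction with
  | _ s ih =>
    intro A
    by_cases h : ∀ i ∈ s, t < ((Q i ∩ A).card : ℝ)
    · exact ⟨∅, A, Finset.empty_subset _, subset_rfl, by simp, by simp,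
        fun i hi _ => h i hi⟩
    · push_neg at h
      obtain ⟨i₀, hi₀s, hi₀⟩ := h
      obtain ⟨z, A', hzs, hA', hcard, h0, h1⟩ :=
        ih (s.erase i₀) (Finset.erase_ssubset hi₀s) (A \ Q i₀)
      have hi₀z : i₀ ∉ z := fun hmem => (Finset.mem_erase.mp (hzs hmem)).1 rfl
      refine ⟨insert i₀ z, A', ?_, hA'.trans (Finset.sdiff_subset), ?_, ?_, ?_⟩
      · intro i hi
        rcases Finset.mem_insert.mp hi with rfl | hiz
        · exact hi₀s
        · exact Finset.mem_of_mem_erase (hzs hiz)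
      · have h2 : ((A \ Q i₀).card : ℝ) + ((A ∩ Q i₀).card : ℝ) = (A.card : ℝ) := by
          rw_mod_cast [Finset.card_sdiff_add_card_inter]
        have h3 : ((A ∩ Q i₀).card : ℝ) ≤ t := by rwa [Finset.inter_comm]
        rw [Finset.card_insert_of_notMem hi₀z]
        have hexp : (((z.card + 1 : ℕ) : ℝ)) * t = (z.card : ℝ) * t + t := by
          push_cast; ring
        rw [hexp]
        linarith
      · intro i hi
        rcases Finset.mem_insert.mp hi with rfl | hiz
        · have : Q i ∩ A' ⊆ Q i ∩ (A \ Q i) := fun m hm =>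
            Finset.mem_inter.mpr ⟨(Finset.mem_inter.mp hm).1, hA' (Finset.mem_inter.mp hm).2⟩
          rw [Finset.inter_sdiff_self] at this
          exact Finset.subset_empty.mp this
        · exact h0 i hiz
      · intro i his hiz
        have hne : i ≠ i₀ := fun hEq => hiz (hEq ▸ Finset.mem_insert_self i₀ z)
        exact h1 i (Finset.mem_erase.mpr ⟨hne, his⟩)
          (fun hmem => hiz (Finset.mem_insert_of_mem hmem))

/-- Main adversary induction: given an algorithm of depth `r` with width at
most `d - 1` and an active set `A`, there is a subset `B ⊆ A` losing at most
`d^r - 1` elements and an output index `j` such that any vector supported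
exactly on `B \ {j}` makes the algorithm output `j`. -/
lemma mainAux {N : ℕ} (d : ℝ) (hd : 1 ≤ d) :
    ∀ {r : ℕ} (T : ORAlg N r), (orWidth T : ℝ) + 1 ≤ d →
      ∀ A : Finset (Fin N), ∃ (B : Finset (Fin N)) (j : Fin N), B ⊆ A ∧
        ((A.card : ℝ) ≤ (B.card : ℝ) + d ^ r - 1) ∧
        ∀ x : Fin N → ℝ, (∀ i, x i ≠ 0 ↔ i ∈ B.erase j) → orRun T x = j := by
  intro r T
  induction T with
  | leaf j =>
    intro _ A
    exact ⟨A, j, subset_rfl, by simp, fun x _ => rfl⟩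
  | @node r qs next ih =>
    intro hW A
    have hwnode : (orWidth (ORAlg.node qs next) : ℝ) =
        ((max qs.length (Finset.univ.sup fun b : Fin qs.length → Bool =>
          orWidth (next b)) : ℕ) : ℝ) := by rfl
    have hlen : (qs.length : ℝ) ≤ d - 1 := by
      have h1 : qs.length ≤ orWidth (ORAlg.node qs next) := le_max_left _ _
      have h2 : (qs.length : ℝ) ≤ (orWidth (ORAlg.node qs next) : ℝ) :=
        Nat.cast_le.mpr h1
      linarith
    have hsub : ∀ b : Fin qs.length → Bool, (orWidth (next b) : ℝ) + 1 ≤ d := by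
      intro b
      have heq : orWidth (ORAlg.node qs next) = max qs.length
          (Finset.univ.sup fun b : Fin qs.length → Bool => orWidth (next b)) := rfl
      have h1 : orWidth (next b) ≤ orWidth (ORAlg.node qs next) := by
        rw [heq]
        exact le_trans
          (Finset.le_sup (f := fun b : Fin qs.length → Bool => orWidth (next b))
            (Finset.mem_univ b)) (le_max_right _ _)
      have h2 : (orWidth (next b) : ℝ) ≤ (orWidth (ORAlg.node qs next) : ℝ) :=
        Nat.cast_le.mpr h1
      linarith
    obtain ⟨z, A', hzs, hA'A, hcard, h0, h1⟩ :=
      roundLemma (fun i : Fin qs.length => qs.get i) (d ^ r) Finset.univ A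
    obtain ⟨B, j, hBA', hBcard, hcons⟩ :=
      ih (fun i => if i ∈ z then false else true) (hsub _) A'
    refine ⟨B, j, hBA'.trans hA'A, ?_, ?_⟩
    · -- cardinality bound
      have hz : (z.card : ℝ) ≤ d - 1 := by
        have h1 : z.card ≤ qs.length := by
          have := Finset.card_le_card hzs
          simpa using this
        have h2 : (z.card : ℝ) ≤ (qs.length : ℝ) := Nat.cast_le.mpr h1
        linarith
      have hdpow : (0 : ℝ) ≤ d ^ r := pow_nonneg (by linarith) r
      have hmul : (z.card : ℝ) * d ^ r ≤ (d - 1) * d ^ r :=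
        mul_le_mul_of_nonneg_right hz hdpow
      have hps : (d - 1) * d ^ r = d ^ (r + 1) - d ^ r := by
        rw [pow_succ]; ring
      linarith
    · -- consistency
      intro x hx
      have hans : (fun i => orAnswer x (qs.get i)) =
          (fun i => if i ∈ z then false else true) := by
        funext i
        by_cases hi : i ∈ z
        · simp only [hi, if_true]
          have hempty := h0 i hi
          unfold orAnswer
          rw [if_neg]
          rintro ⟨m, hm, hxm⟩
          have hmB : m ∈ B.erase j := (hx m).mp hxm
          have : m ∈ (qs.get i) ∩ A' := Finset.mem_inter.mpr ⟨hm, hBA' (Finset.mem_of_mem_erase hmB)⟩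
          rw [hempty] at this
          exact absurd this (Finset.notMem_empty m)
        · simp only [hi, if_false]
          have hbig := h1 i (Finset.mem_univ i) hi
          -- |Q ∩ B| ≥ |Q ∩ A'| - |A' \ B| > d^r - (d^r - 1) = 1
          have hsubu : (qs.get i) ∩ A' ⊆ ((qs.get i) ∩ B) ∪ (A' \ B) := by
            intro m hm
            obtain ⟨hm1, hm2⟩ := Finset.mem_inter.mp hm
            by_cases hmB : m ∈ B
            · exact Finset.mem_union_left _ (Finset.mem_inter.mpr ⟨hm1, hmB⟩)
            · exact Finset.mem_union_right _ (Finset.mem_sdiff.mpr ⟨hm2, hmB⟩)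
          have hcard1 : ((qs.get i ∩ A').card : ℝ) ≤
              ((qs.get i ∩ B).card : ℝ) + ((A' \ B).card : ℝ) := by
            have := (Finset.card_le_card hsubu).trans (Finset.card_union_le _ _)
            exact_mod_cast this
          have hsd : ((A' \ B).card : ℝ) = (A'.card : ℝ) - (B.card : ℝ) := by
            rw [Finset.card_sdiff_of_subset hBA']
            rw [Nat.cast_sub (Finset.card_le_card hBA')]
          have h1lt : (1 : ℝ) < ((qs.get i ∩ B).card : ℝ) := by
            rw [hsd] at hcard1
            linarith
          have h1lt' : 1 < (qs.get i ∩ B).card := by exact_mod_cast h1lt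
          obtain ⟨m, hm, hmj⟩ := Finset.exists_mem_ne h1lt' j
          obtain ⟨hm1, hm2⟩ := Finset.mem_inter.mp hm
          have hxm : x m ≠ 0 := (hx m).mpr (Finset.mem_erase.mpr ⟨hmj, hm2⟩)
          unfold orAnswer
          rw [if_pos ⟨m, hm1, hxm⟩]
      show orRun (next fun i => orAnswer x (qs.get i)) x = j
      rw [hans]
      exact hcons x hx

/-- single element recovery lower bound with OR-queries: any
`r`-round deterministic OR-query algorithm making strictly fewer than
`N^{1/r} - 1` queries in every round fails on some nonzero nonnegative 0/1
input vector `x`: the index it outputs on `x` satisfies `x j = 0` (the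
adversary's fooling vector is consistent with all the answers the algorithm
received). -/
theorem stmt10 (N r : ℕ) (hr : 1 ≤ r) (T : ORAlg N r)
    (hW : (orWidth T : ℝ) < (N : ℝ) ^ ((1 : ℝ) / r) - 1) :
    ∃ x : Fin N → ℝ, (∀ j, x j = 0 ∨ x j = 1) ∧ x ≠ 0 ∧ x (orRun T x) = 0 := by
  set d : ℝ := (orWidth T : ℝ) + 1 with hd_def
  have hd1 : (1 : ℝ) ≤ d := by
    have : (0 : ℝ) ≤ (orWidth T : ℝ) := Nat.cast_nonneg _
    linarith
  obtain ⟨B, j, hBsub, hBcard, hcons⟩ :=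
    mainAux d hd1 T (le_refl d) Finset.univ
  have hr0 : (r : ℝ) ≠ 0 := by
    have : 0 < r := hr
    exact_mod_cast this.ne'
  have hpow : d ^ r < (N : ℝ) := by
    have hlt : d < (N : ℝ) ^ ((1 : ℝ) / r) := by linarith
    have h1 : d ^ r < ((N : ℝ) ^ ((1 : ℝ) / r)) ^ r :=
      pow_lt_pow_left₀ hlt (by linarith) (by omega)
    have h2 : (((N : ℝ) ^ ((1 : ℝ) / r)) ^ (r : ℕ)) = (N : ℝ) := by
      rw [← Real.rpow_natCast ((N : ℝ) ^ ((1 : ℝ) / r)) r,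
        ← Real.rpow_mul (Nat.cast_nonneg N), one_div,
        inv_mul_cancel₀ hr0, Real.rpow_one]
    rwa [h2] at h1
  have hunivcard : ((Finset.univ : Finset (Fin N)).card : ℝ) = (N : ℝ) := by
    simp
  have hB2 : (1 : ℝ) < (B.card : ℝ) := by
    rw [hunivcard] at hBcard
    linarith
  have hB2' : 1 < B.card := by exact_mod_cast hB2
  -- the fooling vector
  refine ⟨fun i => if i ∈ B.erase j then (1 : ℝ) else 0, ?_, ?_, ?_⟩
  · intro i
    by_cases hi : i ∈ B.erase j <;> simp [hi]
  · -- nonzero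
    obtain ⟨m, hm, hmj⟩ := Finset.exists_mem_ne hB2' j
    have hmB : m ∈ B.erase j := Finset.mem_erase.mpr ⟨hmj, hm⟩
    intro hzero
    have := congrFun hzero m
    simp [hmB] at this
  · have hsupp : ∀ i, (if i ∈ B.erase j then (1 : ℝ) else 0) ≠ 0 ↔ i ∈ B.erase j := by
      intro i
      by_cases hi : i ∈ B.erase j <;> simp [hi]
    have hrun := hcons _ hsupp
    rw [hrun]
    simp
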